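/- Let N be a γ-net (0 < γ < 1) of the unit sphere S of a subspace V ⊆ ℝ^n, and suppose Θ satisfies |⟨x,y⟩ − ⟨Θx,Θy⟩| ≤ η for all x, y ∈ N. Then every unit vector n ∈ S satisfies |1 − ‖Θn‖²| ≤ η/(1−γ)². -/

import Mathlib

open Matrix BigOperators

noncomputable section

/-- Inner product induced by `R`: `⟨x,y⟩_U = ⟨R x, y⟩`. -/
def ipR {n : ℕ} (R : Matrix (Fin n) (Fin n) ℝ) (x y : Fin n → ℝ) : ℝ :=
  R.mulVec x ⬝ᵥ y

/-- Norm induced by `R`. -/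
def normR {n : ℕ} (R : Matrix (Fin n) (Fin n) ℝ) (x : Fin n → ℝ) : ℝ :=
  Real.sqrt (ipR R x x)

/-- Euclidean norm. -/
def norm2 {m : ℕ} (v : Fin m → ℝ) : ℝ :=
  Real.sqrt (v ⬝ᵥ v)

/-- Dual norm `‖y‖_{U'}` induced by `⟨·, R⁻¹ ·⟩`. -/
def normDual {n : ℕ} (R : Matrix (Fin n) (Fin n) ℝ) (y : Fin n → ℝ) : ℝ :=
  Real.sqrt (y ⬝ᵥ R⁻¹.mulVec y)

/-- Dual seminorm `‖y‖_{Z'} = sup_{w ∈ Z, w ≠ 0} |⟨y,w⟩|/‖w‖_U`. -/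
def dualSemi {n : ℕ} (R : Matrix (Fin n) (Fin n) ℝ) (Z : Submodule ℝ (Fin n → ℝ))
    (y : Fin n → ℝ) : ℝ :=
  ⨆ w : Z, |y ⬝ᵥ (w : Fin n → ℝ)| / normR R (w : Fin n → ℝ)

/-- Sketched dual seminorm `‖y‖_{Z'}^Θ = sup_{w ∈ Z, w ≠ 0} |⟨Θ R⁻¹ y, Θ w⟩|/‖Θ w‖`. -/
def skDualSemi {n k : ℕ} (R : Matrix (Fin n) (Fin n) ℝ) (Θ : Matrix (Fin k) (Fin n) ℝ)
    (Z : Submodule ℝ (Fin n → ℝ)) (y : Fin n → ℝ) : ℝ :=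
  ⨆ w : Z, |(Θ.mulVec (R⁻¹.mulVec y)) ⬝ᵥ (Θ.mulVec (w : Fin n → ℝ))| /
      norm2 (Θ.mulVec (w : Fin n → ℝ))

/-- `i`-th column of a matrix as a vector. -/
def colV {n m : ℕ} (M : Matrix (Fin n) (Fin m) ℝ) (i : Fin m) : Fin n → ℝ :=
  fun j => M j i

/-- Squared Frobenius norm. -/
def frob2 {a b : ℕ} (M : Matrix (Fin a) (Fin b) ℝ) : ℝ :=
  ∑ i, ∑ j, (M i j) ^ 2

section auxNet
variable {m : ℕ}

lemma norm2_eq' (v : Fin m → ℝ) : norm2 v = ‖(WithLp.equiv 2 (Fin m → ℝ)).symm v‖ := by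
  rw [norm2, EuclideanSpace.norm_eq]
  congr 1
  simp [dotProduct, sq_abs, WithLp.equiv_symm_apply, PiLp.toLp_apply, sq]

lemma dot_eq_inner' (v w : Fin m → ℝ) : v ⬝ᵥ w =
    (inner ℝ ((WithLp.equiv 2 (Fin m → ℝ)).symm v) ((WithLp.equiv 2 (Fin m → ℝ)).symm w) : ℝ) := by
  simp [dotProduct, PiLp.inner_apply, RCLike.inner_apply, WithLp.equiv_symm_apply, PiLp.toLp_apply, mul_comm]

lemma norm2_nonneg' (v : Fin m → ℝ) : 0 ≤ norm2 v := by rw [norm2_eq']; exact norm_nonneg _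

lemma norm2_smul' (c : ℝ) (v : Fin m → ℝ) : norm2 (c • v) = |c| * norm2 v := by
  rw [norm2_eq', norm2_eq']
  have h : (WithLp.equiv 2 (Fin m → ℝ)).symm (c • v)
      = c • (WithLp.equiv 2 (Fin m → ℝ)).symm v := rfl
  rw [h, norm_smul, Real.norm_eq_abs]

lemma norm2_pos' (v : Fin m → ℝ) (h : v ≠ 0) : 0 < norm2 v := by
  rw [norm2_eq', norm_pos_iff]
  intro h0
  apply h
  have := congrArg (WithLp.equiv 2 (Fin m → ℝ)) h0
  simpa using this

lemma abs_dot_le' (v w : Fin m → ℝ) : |v ⬝ᵥ w| ≤ norm2 v * norm2 w := by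
  rw [dot_eq_inner', norm2_eq', norm2_eq']; exact abs_real_inner_le_norm _ _

lemma norm2_sub_le' (x y : Fin m → ℝ) : norm2 (x - y) ≤ norm2 x + norm2 y := by
  rw [norm2_eq', norm2_eq', norm2_eq']
  exact norm_sub_le _ _

lemma dot_self_nonneg' (v : Fin m → ℝ) : 0 ≤ v ⬝ᵥ v := by
  apply Finset.sum_nonneg; intro i _; exact mul_self_nonneg _

lemma norm2_sq' (v : Fin m → ℝ) : v ⬝ᵥ v = (norm2 v)^2 :=
  (Real.sq_sqrt (dot_self_nonneg' v)).symm

lemma mulVec_norm2_le' {n k : ℕ} (Θ : Matrix (Fin k) (Fin n) ℝ) :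
    ∃ C : ℝ, 0 ≤ C ∧ ∀ x, norm2 (Θ.mulVec x) ≤ C * norm2 x := by
  set L := LinearMap.toContinuousLinearMap (Matrix.toEuclideanLin Θ) with hL
  refine ⟨‖L‖, norm_nonneg _, fun x => ?_⟩
  rw [norm2_eq', norm2_eq']
  have h : (WithLp.equiv 2 (Fin k → ℝ)).symm (Θ.mulVec x)
      = L ((WithLp.equiv 2 (Fin n → ℝ)).symm x) := by
    simp [hL, Matrix.toEuclideanLin_apply]
  rw [h]; exact L.le_opNorm _

lemma sum_dotProduct' {q : ℕ} (s : Finset ℕ) (f : ℕ → Fin q → ℝ) (w : Fin q → ℝ) :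
    (∑ i ∈ s, f i) ⬝ᵥ w = ∑ i ∈ s, f i ⬝ᵥ w := by
  classical
  induction s using Finset.induction_on with
  | empty => simp [zero_dotProduct]
  | insert _ _ h ih => rw [Finset.sum_insert h, Finset.sum_insert h, add_dotProduct, ih]

lemma dotProduct_sum' {q : ℕ} (s : Finset ℕ) (w : Fin q → ℝ) (f : ℕ → Fin q → ℝ) :
    w ⬝ᵥ (∑ i ∈ s, f i) = ∑ i ∈ s, w ⬝ᵥ f i := by
  classical
  induction s using Finset.induction_on with
  | empty => simp [dotProduct_zero]
  | insert _ _ h ih => rw [Finset.sum_insert h, Finset.sum_insert h, dotProduct_add, ih]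

lemma mulVec_sum' {q r : ℕ} (M : Matrix (Fin r) (Fin q) ℝ) (s : Finset ℕ)
    (f : ℕ → Fin q → ℝ) : M.mulVec (∑ i ∈ s, f i) = ∑ i ∈ s, M.mulVec (f i) := by
  classical
  induction s using Finset.induction_on with
  | empty => simp [Matrix.mulVec_zero]
  | insert _ _ h ih => rw [Finset.sum_insert h, Finset.sum_insert h, Matrix.mulVec_add, ih]

lemma expand_dot {q : ℕ} (a : ℕ → ℝ) (f g : ℕ → Fin q → ℝ) (m : ℕ) :
    (∑ i ∈ Finset.range m, a i • f i) ⬝ᵥ (∑ j ∈ Finset.range m, a j • g j)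
    = ∑ i ∈ Finset.range m, ∑ j ∈ Finset.range m, a i * a j * (f i ⬝ᵥ g j) := by
  rw [sum_dotProduct']
  refine Finset.sum_congr rfl fun i _ => ?_
  rw [smul_dotProduct, dotProduct_sum', smul_eq_mul, Finset.mul_sum]
  refine Finset.sum_congr rfl fun j _ => ?_
  rw [dotProduct_smul, smul_eq_mul]
  ring

end auxNet

set_option maxHeartbeats 1000000 in
/-- If `Θ` approximately preserves inner products on a γ-net of the unit sphere of `V`
up to additive error η, then `|1 - ‖Θ n‖²| ≤ η/(1-γ)²` for every unit vector `n ∈ V`. -/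
theorem net_to_sphere_bound {n k : ℕ} (Θ : Matrix (Fin k) (Fin n) ℝ)
    (V : Submodule ℝ (Fin n → ℝ)) (N : Set (Fin n → ℝ)) (γ η : ℝ)
    (hγ0 : 0 < γ) (hγ1 : γ < 1)
    (hNsub : ∀ y ∈ N, y ∈ V ∧ norm2 y = 1)
    (hNnet : ∀ x ∈ V, norm2 x = 1 → ∃ y ∈ N, norm2 (x - y) ≤ γ)
    (hΘ : ∀ x ∈ N, ∀ y ∈ N, |x ⬝ᵥ y - (Θ.mulVec x) ⬝ᵥ (Θ.mulVec y)| ≤ η) :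
    ∀ v ∈ V, norm2 v = 1 →
      |1 - (Θ.mulVec v) ⬝ᵥ (Θ.mulVec v)| ≤ η / (1 - γ) ^ 2 := by
  intro v hv hv1
  obtain ⟨y₀, hy₀N, _⟩ := hNnet v hv hv1
  have hη : 0 ≤ η := le_trans (abs_nonneg _) (hΘ y₀ hy₀N y₀ hy₀N)
  -- picking function
  have hpick : ∀ u : Fin n → ℝ, ∃ y, y ∈ N ∧ (u ∈ V → norm2 u = 1 → norm2 (u - y) ≤ γ) := by
    intro u
    by_cases h : u ∈ V ∧ norm2 u = 1
    · obtain ⟨y, hyN, hle⟩ := hNnet u h.1 h.2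
      exact ⟨y, hyN, fun _ _ => hle⟩
    · exact ⟨y₀, hy₀N, fun h1 h2 => absurd ⟨h1, h2⟩ h⟩
  choose p hpN hpclose using hpick
  -- residual sequence
  set w : ℕ → Fin n → ℝ :=
    fun i => Nat.rec v (fun _ wi => wi - norm2 wi • p ((norm2 wi)⁻¹ • wi)) i with hw
  set a : ℕ → ℝ := fun i => norm2 (w i) with ha
  set y : ℕ → Fin n → ℝ := fun i => p ((norm2 (w i))⁻¹ • w i) with hy
  have hwS : ∀ i, w (i + 1) = w i - a i • y i := fun i => rfl
  have hw0 : w 0 = v := rfl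
  clear_value w
  -- invariant
  have hinv : ∀ i, w i ∈ V ∧ norm2 (w i) ≤ γ ^ i := by
    intro i
    induction i with
    | zero => exact ⟨by rw [hw0]; exact hv, by rw [hw0, hv1, pow_zero]⟩
    | succ i ih =>
      by_cases h0 : w i = 0
      · have hz : w (i + 1) = 0 := by
          rw [hwS, h0]
          simp [ha, hy, h0, norm2]
        constructor
        · rw [hz]; exact V.zero_mem
        · rw [hz]
          have : norm2 (0 : Fin n → ℝ) = 0 := by
            simp [norm2, zero_dotProduct]
          rw [this]; positivity
      · have hapos : 0 < a i := norm2_pos' _ h0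
        have hane : a i ≠ 0 := ne_of_gt hapos
        have huV : (a i)⁻¹ • w i ∈ V := V.smul_mem _ ih.1
        have hu1 : norm2 ((a i)⁻¹ • w i) = 1 := by
          rw [norm2_smul', abs_of_pos (inv_pos.mpr hapos)]
          exact inv_mul_cancel₀ hane
        have hclose := hpclose ((a i)⁻¹ • w i) huV hu1
        have hrw : w (i + 1) = a i • ((a i)⁻¹ • w i - y i) := by
          rw [hwS, smul_sub, smul_inv_smul₀ hane]
        constructor
        · rw [hwS]
          exact V.sub_mem ih.1 (V.smul_mem _ (hNsub _ (hpN _)).1)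
        · rw [hrw, norm2_smul', abs_of_pos hapos, pow_succ]
          have : norm2 ((a i)⁻¹ • w i - y i) ≤ γ := hclose
          calc a i * norm2 ((a i)⁻¹ • w i - y i) ≤ γ ^ i * γ :=
            mul_le_mul ih.2 this (norm2_nonneg' _) (by positivity)
          _ = γ ^ i * γ := rfl
  have haN : ∀ i, y i ∈ N := fun i => hpN _
  have ha0 : ∀ i, 0 ≤ a i := fun i => norm2_nonneg' _
  have haγ : ∀ i, a i ≤ γ ^ i := fun i => (hinv i).2
  set S : ℕ → Fin n → ℝ := fun m => ∑ i ∈ Finset.range m, a i • y i with hS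
  have hSv : ∀ m, S m = v - w m := by
    intro m
    induction m with
    | zero => simp [hS, hw0]
    | succ m ih =>
      have hstep : S (m + 1) = S m + a m • y m := Finset.sum_range_succ _ m
      rw [hstep, ih, hwS]
      abel
  -- geometric bound
  have h1γ : (0:ℝ) < 1 - γ := by linarith
  have hgeo : ∀ m : ℕ, ∑ i ∈ Finset.range m, γ ^ i ≤ 1 / (1 - γ) := by
    intro m
    rw [geom_sum_eq (ne_of_lt hγ1), show (γ ^ m - 1) / (γ - 1) = (1 - γ ^ m) / (1 - γ) by
      rw [← neg_div_neg_eq]; ring_nf]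
    rw [div_le_div_iff₀ h1γ h1γ]
    have : (0:ℝ) ≤ γ ^ m := by positivity
    nlinarith
  have hsum_a : ∀ m, ∑ i ∈ Finset.range m, a i ≤ 1 / (1 - γ) :=
    fun m => le_trans (Finset.sum_le_sum fun i _ => haγ i) (hgeo m)
  have hsum_a0 : ∀ m, (0:ℝ) ≤ ∑ i ∈ Finset.range m, a i :=
    fun m => Finset.sum_nonneg fun i _ => ha0 i
  -- mulVec of partial sums
  have hmv : ∀ m, Θ.mulVec (S m) = ∑ i ∈ Finset.range m, a i • Θ.mulVec (y i) := by
    intro m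
    have hSm : S m = ∑ i ∈ Finset.range m, a i • y i := rfl
    rw [hSm, mulVec_sum']
    exact Finset.sum_congr rfl fun i _ => Matrix.mulVec_smul _ _ _
  -- bound on partial sums
  have hBS : ∀ m, |S m ⬝ᵥ S m - Θ.mulVec (S m) ⬝ᵥ Θ.mulVec (S m)| ≤ η / (1 - γ) ^ 2 := by
    intro m
    have e1 : S m ⬝ᵥ S m
        = ∑ i ∈ Finset.range m, ∑ j ∈ Finset.range m, a i * a j * (y i ⬝ᵥ y j) := by
      have hSm : S m = ∑ i ∈ Finset.range m, a i • y i := rfl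
      rw [hSm]; exact expand_dot a y y m
    have e2 : Θ.mulVec (S m) ⬝ᵥ Θ.mulVec (S m)
        = ∑ i ∈ Finset.range m, ∑ j ∈ Finset.range m,
            a i * a j * (Θ.mulVec (y i) ⬝ᵥ Θ.mulVec (y j)) := by
      rw [hmv]
      exact expand_dot a (fun i => Θ.mulVec (y i)) (fun i => Θ.mulVec (y i)) m
    rw [e1, e2, ← Finset.sum_sub_distrib]
    have hinner : ∀ i ∈ Finset.range m,
        (∑ j ∈ Finset.range m, a i * a j * (y i ⬝ᵥ y j))
          - ∑ j ∈ Finset.range m, a i * a j * (Θ.mulVec (y i) ⬝ᵥ Θ.mulVec (y j))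
        = ∑ j ∈ Finset.range m,
            a i * a j * (y i ⬝ᵥ y j - Θ.mulVec (y i) ⬝ᵥ Θ.mulVec (y j)) := by
      intro i _
      rw [← Finset.sum_sub_distrib]
      exact Finset.sum_congr rfl fun j _ => by ring
    rw [Finset.sum_congr rfl hinner]
    refine le_trans (Finset.abs_sum_le_sum_abs _ _) ?_
    refine le_trans (Finset.sum_le_sum fun i _ => Finset.abs_sum_le_sum_abs _ _) ?_
    have hterm : ∀ i ∈ Finset.range m, ∀ j ∈ Finset.range m,
        |a i * a j * (y i ⬝ᵥ y j - Θ.mulVec (y i) ⬝ᵥ Θ.mulVec (y j))| ≤ a i * a j * η := by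
      intro i _ j _
      rw [abs_mul, abs_of_nonneg (mul_nonneg (ha0 i) (ha0 j))]
      exact mul_le_mul_of_nonneg_left (hΘ _ (haN i) _ (haN j))
        (mul_nonneg (ha0 i) (ha0 j))
    refine le_trans (Finset.sum_le_sum fun i hi => Finset.sum_le_sum (hterm i hi)) ?_
    have : ∑ i ∈ Finset.range m, ∑ j ∈ Finset.range m, a i * a j * η
        = (∑ i ∈ Finset.range m, a i) * (∑ j ∈ Finset.range m, a j) * η := by
      simp only [Finset.sum_mul, Finset.mul_sum]
      exact Finset.sum_comm
    rw [this]
    have hm := hsum_a m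
    have hm0 := hsum_a0 m
    have : (∑ i ∈ Finset.range m, a i) * (∑ j ∈ Finset.range m, a j) * η
        ≤ (1 / (1 - γ)) * (1 / (1 - γ)) * η := by
      apply mul_le_mul_of_nonneg_right _ hη
      exact mul_le_mul hm hm hm0 (one_div_nonneg.mpr (le_of_lt h1γ))
    refine le_trans this (le_of_eq ?_)
    rw [one_div, div_eq_mul_inv, sq, mul_inv]
    ring
  -- continuity bound
  obtain ⟨C, hC0, hCle⟩ := mulVec_norm2_le' Θ
  have hBxy : ∀ x z : Fin n → ℝ,
      |x ⬝ᵥ z - Θ.mulVec x ⬝ᵥ Θ.mulVec z| ≤ (1 + C ^ 2) * (norm2 x * norm2 z) := by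
    intro x z
    have h1 := abs_dot_le' x z
    have h2 := abs_dot_le' (Θ.mulVec x) (Θ.mulVec z)
    have h3 := hCle x
    have h4 := hCle z
    have h5 : norm2 (Θ.mulVec x) * norm2 (Θ.mulVec z) ≤ (C * norm2 x) * (C * norm2 z) :=
      mul_le_mul h3 h4 (norm2_nonneg' _) (mul_nonneg hC0 (norm2_nonneg' _))
    have h6 := abs_sub (x ⬝ᵥ z) (Θ.mulVec x ⬝ᵥ Θ.mulVec z)
    nlinarith [norm2_nonneg' x, norm2_nonneg' z]
  -- main estimate for each m
  have hdiff : ∀ m : ℕ, |v ⬝ᵥ v - Θ.mulVec v ⬝ᵥ Θ.mulVec v|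
      ≤ η / (1 - γ) ^ 2 + 3 * (1 + C ^ 2) * γ ^ m := by
    intro m
    have hvS : v = S m + w m := by rw [hSv]; abel
    have hsplit : v ⬝ᵥ v - Θ.mulVec v ⬝ᵥ Θ.mulVec v
        = (S m ⬝ᵥ S m - Θ.mulVec (S m) ⬝ᵥ Θ.mulVec (S m))
          + (w m ⬝ᵥ v - Θ.mulVec (w m) ⬝ᵥ Θ.mulVec v)
          + (S m ⬝ᵥ w m - Θ.mulVec (S m) ⬝ᵥ Θ.mulVec (w m)) := by
      rw [hvS]
      simp only [add_dotProduct, dotProduct_add, Matrix.mulVec_add]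
      ring
    have hγm1 : γ ^ m ≤ 1 := pow_le_one₀ (le_of_lt hγ0) (le_of_lt hγ1)
    have hwmle : norm2 (w m) ≤ γ ^ m := (hinv m).2
    have hSle : norm2 (S m) ≤ 2 := by
      rw [hSv]
      refine le_trans (norm2_sub_le' v (w m)) ?_
      rw [hv1]
      linarith
    have h2 : |w m ⬝ᵥ v - Θ.mulVec (w m) ⬝ᵥ Θ.mulVec v| ≤ (1 + C ^ 2) * (γ ^ m * 1) := by
      refine le_trans (hBxy _ _) ?_
      apply mul_le_mul_of_nonneg_left _ (by positivity)
      rw [hv1]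
      exact mul_le_mul_of_nonneg_right hwmle zero_le_one
    have h3 : |S m ⬝ᵥ w m - Θ.mulVec (S m) ⬝ᵥ Θ.mulVec (w m)|
        ≤ (1 + C ^ 2) * (2 * γ ^ m) := by
      refine le_trans (hBxy _ _) ?_
      apply mul_le_mul_of_nonneg_left _ (by positivity)
      exact mul_le_mul hSle hwmle (norm2_nonneg' _) (by norm_num)
    have h1 := hBS m
    rw [hsplit]
    have habs := abs_add_le
      ((S m ⬝ᵥ S m - Θ.mulVec (S m) ⬝ᵥ Θ.mulVec (S m))
        + (w m ⬝ᵥ v - Θ.mulVec (w m) ⬝ᵥ Θ.mulVec v))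
      (S m ⬝ᵥ w m - Θ.mulVec (S m) ⬝ᵥ Θ.mulVec (w m))
    have habs2 := abs_add_le (S m ⬝ᵥ S m - Θ.mulVec (S m) ⬝ᵥ Θ.mulVec (S m))
      (w m ⬝ᵥ v - Θ.mulVec (w m) ⬝ᵥ Θ.mulVec v)
    nlinarith [sq_nonneg C]
  -- pass to the limit
  have hlim : Filter.Tendsto (fun m : ℕ => η / (1 - γ) ^ 2 + 3 * (1 + C ^ 2) * γ ^ m)
      Filter.atTop (nhds (η / (1 - γ) ^ 2 + 3 * (1 + C ^ 2) * 0)) := by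
    exact Filter.Tendsto.add tendsto_const_nhds
      ((tendsto_pow_atTop_nhds_zero_of_lt_one (le_of_lt hγ0) hγ1).const_mul _)
  have hfin : |v ⬝ᵥ v - Θ.mulVec v ⬝ᵥ Θ.mulVec v| ≤ η / (1 - γ) ^ 2 := by
    have := ge_of_tendsto' hlim hdiff
    simpa using this
  have hvv : v ⬝ᵥ v = 1 := by rw [norm2_sq', hv1]; norm_num
  have hgoal : (1:ℝ) - Θ.mulVec v ⬝ᵥ Θ.mulVec v
      = v ⬝ᵥ v - Θ.mulVec v ⬝ᵥ Θ.mulVec v := by rw [hvv]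
  rw [hgoal]
  exact hfin
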